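/- arXiv:2603.08559 — 2 statements merged into one kernel-verified Lean document; each statement's English description precedes it below -/
import Mathlib

section
/- Let t ∈ ((√5−1)/2, 1) and r = (1−t²)/2. There is no straight line in ℝ² that intersects all three closed disks of radius r centered at (t,0), (−t,0), and (0,−t). -/
/-- Auxiliary: membership in a complex closed ball gives a real coordinate inequality. -/
lemma ball_coords {z w : ℂ} {r : ℝ} (h : z ∈ Metric.closedBall w r) (hr : 0 ≤ r) :
    (z.re - w.re)^2 + (z.im - w.im)^2 ≤ r^2 := by
  rw [Metric.mem_closedBall, Complex.dist_eq] at h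
  have h2 : ‖z - w‖ ^ 2 ≤ r ^ 2 := by
    apply pow_le_pow_left₀ (norm_nonneg _) h 2
  rw [Complex.sq_norm, Complex.normSq_apply] at h2
  simpa [sub_eq_add_neg, pow_two] using h2

set_option maxHeartbeats 1000000 in
theorem stmt_3 (t r : ℝ) (ht : t ∈ Set.Ioo ((Real.sqrt 5 - 1) / 2) 1)
    (hr : r = (1 - t^2) / 2) :
    ¬ ∃ a b c : ℝ, (a ≠ 0 ∨ b ≠ 0) ∧
      (∃ z : ℂ, a * z.re + b * z.im = c ∧ z ∈ Metric.closedBall (t : ℂ) r) ∧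
      (∃ z : ℂ, a * z.re + b * z.im = c ∧ z ∈ Metric.closedBall (-t : ℂ) r) ∧
      (∃ z : ℂ, a * z.re + b * z.im = c ∧ z ∈ Metric.closedBall (-(t : ℂ) * Complex.I) r) := by
  obtain ⟨htl, htu⟩ := ht
  have hs5 : Real.sqrt 5 ^ 2 = 5 := Real.sq_sqrt (by norm_num)
  have hs5nn : (0:ℝ) ≤ Real.sqrt 5 := Real.sqrt_nonneg 5
  have ht0 : 0 < t := by nlinarith
  -- t² + t > 1
  have hkey : 1 < t^2 + t := by nlinarith
  have hr0 : 0 < r := by nlinarith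
  rintro ⟨a, b, c, hab, ⟨z1, hl1, hb1⟩, ⟨z2, hl2, hb2⟩, ⟨z3, hl3, hb3⟩⟩
  have hc1 := ball_coords hb1 hr0.le
  have hc2 := ball_coords hb2 hr0.le
  have hc3 := ball_coords hb3 hr0.le
  simp only [Complex.ofReal_re, Complex.ofReal_im, Complex.neg_re, Complex.neg_im,
    Complex.mul_re, Complex.mul_im, Complex.I_re, Complex.I_im] at hc1 hc2 hc3
  -- so hc1 : (z1.re - t)^2 + (z1.im - 0)^2 ≤ r^2, etc.
  set S := a^2 + b^2 with hS
  have hS0 : 0 < S := by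
    rcases hab with h | h
    · have ha : 0 < a^2 := by positivity
      nlinarith [sq_nonneg b]
    · have hbp : 0 < b^2 := by positivity
      nlinarith [sq_nonneg a]
  -- Cauchy–Schwarz style bounds
  have h1 : (a*t - c)^2 ≤ S * r^2 := by
    have : a*t - c = a*(t - z1.re) + b*(0 - z1.im) := by rw [← hl1]; ring
    rw [this]
    nlinarith [sq_nonneg (a*(0 - z1.im) - b*(t - z1.re)), sq_nonneg a, sq_nonneg b, hc1]
  have h2 : (a*t + c)^2 ≤ S * r^2 := by
    have : a*t + c = a*(t + z2.re) + b*(0 + z2.im) := by rw [← hl2]; ring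
    rw [this]
    nlinarith [sq_nonneg (a*(0 + z2.im) - b*(t + z2.re)), sq_nonneg a, sq_nonneg b, hc2]
  have h3 : (b*t + c)^2 ≤ S * r^2 := by
    have : b*t + c = a*(0 + z3.re) + b*(t + z3.im) := by rw [← hl3]; ring
    rw [this]
    nlinarith [sq_nonneg (a*(t + z3.im) - b*(0 + z3.re)), sq_nonneg a, sq_nonneg b, hc3]
  -- combine: S * t² ≤ 4 * S * r²
  set u := a*t - c
  set v := a*t + c
  set w := b*t + c
  have h4 : S * t^2 ≤ 4 * (S * r^2) := by
    have h2at : 2*(a*t) = u + v := by simp [u, v]; ring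
    have h2bt : 2*(b*t) = 2*w + u - v := by simp [u, v, w]; ring
    have heq : 4*(S*t^2) = (u+v)^2 + (2*w + u - v)^2 := by
      simp only [hS]
      linear_combination ((u+v) + 2*a*t)*h2at + ((2*w+u-v) + 2*b*t)*h2bt
    nlinarith [sq_nonneg (u - w), sq_nonneg (v + w), h1, h2, h3]
  have h5 : t^2 ≤ 4 * r^2 := by
    have := (mul_le_mul_iff_of_pos_left hS0).mp (by linarith [h4] : S * t^2 ≤ S * (4 * r^2))
    linarith
  have h6 : t ≤ 2*r := by nlinarith
  nlinarith
end

section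
/- Let F be a rational function on ℂ² (written as a quotient of two polynomials with no common factors) that is holomorphic on a neighborhood of a point (w₁, γ) with γ on the unit circle. Suppose for each τ on the unit circle near γ, the function z₁ ↦ F(z₁, τ) is constant on a neighborhood of w₁. Then ∂F/∂z₁ is identically zero on the domain of F; i.e., F depends only on z₂. -/
open Polynomial

noncomputable def phi11 (z₂ : ℂ) : MvPolynomial (Fin 2) ℂ →ₐ[ℂ] Polynomial ℂ :=
  MvPolynomial.aeval ![Polynomial.X, Polynomial.C z₂]

lemma eval_phi11 (z₂ w : ℂ) (P : MvPolynomial (Fin 2) ℂ) :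
    (phi11 z₂ P).eval w = MvPolynomial.eval ![w, z₂] P := by
  have h : (Polynomial.aeval w).comp (MvPolynomial.aeval (R := ℂ) ![Polynomial.X, Polynomial.C z₂])
      = MvPolynomial.aeval ![w, z₂] := by
    rw [MvPolynomial.comp_aeval]
    congr 1
    funext i
    fin_cases i <;> simp
  have h2 := DFunLike.congr_fun h P
  simp only [AlgHom.coe_comp, Function.comp_apply] at h2
  rw [phi11, ← Polynomial.coe_aeval_eq_eval, h2]
  rw [show MvPolynomial.eval ![w,z₂] = RingHomClass.toRingHom (MvPolynomial.aeval ![w,z₂]) from (MvPolynomial.coe_aeval_eq_eval _).symm]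
  rfl

lemma derivative_phi11 (z₂ : ℂ) (P : MvPolynomial (Fin 2) ℂ) :
    Polynomial.derivative (phi11 z₂ P) = phi11 z₂ (MvPolynomial.pderiv 0 P) := by
  induction P using MvPolynomial.induction_on with
  | C a => simp [phi11]
  | add p q hp hq => simp [map_add, hp, hq]
  | mul_X p i hp =>
    rw [map_mul, Polynomial.derivative_mul, hp]
    rw [(MvPolynomial.pderiv 0).leibniz p (MvPolynomial.X i), map_add, smul_eq_mul, smul_eq_mul,
      map_mul, map_mul]
    fin_cases i <;> simp [phi11] <;> ring

noncomputable def theta11 : MvPolynomial (Fin 2) ℂ →ₐ[ℂ] Polynomial (Polynomial ℂ) :=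
  MvPolynomial.aeval ![Polynomial.X, Polynomial.C Polynomial.X]

lemma map_theta11 (τ : ℂ) (P : MvPolynomial (Fin 2) ℂ) :
    Polynomial.map (Polynomial.evalRingHom τ) (theta11 P) = phi11 τ P := by
  have h : (Polynomial.mapAlgHom (Polynomial.aeval τ)).comp
        (MvPolynomial.aeval (R := ℂ) ![Polynomial.X, Polynomial.C Polynomial.X])
      = MvPolynomial.aeval ![Polynomial.X, Polynomial.C τ] := by
    rw [MvPolynomial.comp_aeval]
    congr 1
    funext i
    fin_cases i <;> simp [Polynomial.mapAlgHom]
  have h2 := DFunLike.congr_fun h P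
  simp only [AlgHom.coe_comp, Function.comp_apply] at h2
  rw [theta11, phi11, ← h2]
  rfl

lemma arc_infinite11 (γ : ℂ) (hγ : ‖γ‖ = 1) {ε : ℝ} (hε : 0 < ε) :
    {τ : ℂ | ‖τ‖ = 1 ∧ ‖τ - γ‖ < ε}.Infinite := by
  set m : ℝ := min (ε / 2) 1 with hm
  have hm0 : 0 < m := lt_min (by linarith) one_pos
  have hγ0 : γ ≠ 0 := by intro h; rw [h] at hγ; simp at hγ
  have hinj : Set.InjOn (fun θ : ℝ => γ * Complex.exp (θ * Complex.I)) (Set.Ioo 0 m) := by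
    intro a ha b hb hab
    simp only at hab
    have := mul_left_cancel₀ hγ0 hab
    rw [Complex.exp_eq_exp_iff_exists_int] at this
    obtain ⟨n, hn⟩ := this
    have hI : ((a:ℂ) - b - n * (2 * Real.pi)) * Complex.I = 0 := by linear_combination hn
    have : (a : ℂ) = b + n * (2 * Real.pi) := by
      rcases mul_eq_zero.mp hI with h | h
      · linear_combination h
      · exact absurd h Complex.I_ne_zero
    have hre : a = b + n * (2 * Real.pi) := by exact_mod_cast this
    have hπ : (2:ℝ) ≤ 2 * Real.pi := by nlinarith [Real.pi_gt_three]
    have hb1 : |a - b| < 1 := by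
      rw [abs_lt]
      constructor <;> nlinarith [ha.1, ha.2, hb.1, hb.2, min_le_right (ε/2) 1]
    have hn0 : n = 0 := by
      by_contra hn0
      have : (1:ℝ) ≤ |(n:ℝ)| := by exact_mod_cast Int.one_le_abs (by exact_mod_cast hn0)
      have : (2:ℝ) ≤ |a - b| := by
        rw [hre]
        rw [show b + n * (2 * Real.pi) - b = n * (2 * Real.pi) by ring, abs_mul]
        calc (2:ℝ) = 1 * 2 := by ring
        _ ≤ |(n:ℝ)| * |2 * Real.pi| := by
            apply mul_le_mul this _ (by norm_num) (abs_nonneg _)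
            rw [abs_of_pos (by positivity)]; exact hπ
      linarith
    rw [hre, hn0] at *
    push_cast at hre ⊢
    linarith
  have himg : (fun θ : ℝ => γ * Complex.exp (θ * Complex.I)) '' (Set.Ioo 0 m) ⊆
      {τ : ℂ | ‖τ‖ = 1 ∧ ‖τ - γ‖ < ε} := by
    rintro _ ⟨θ, hθ, rfl⟩
    have habs : ‖Complex.exp (θ * Complex.I)‖ = 1 := by
      exact Complex.norm_exp_ofReal_mul_I θ
    constructor
    · simp only [norm_mul, hγ]
      rw [habs]; ring
    · have : γ * Complex.exp (θ * Complex.I) - γ = γ * (Complex.exp (θ * Complex.I) - 1) := by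
        ring
      rw [this, norm_mul, hγ, one_mul]
      have hθ1 : ‖(θ:ℂ) * Complex.I‖ ≤ 1 := by
        simp only [norm_mul, Complex.norm_I, mul_one, Complex.norm_real, Real.norm_eq_abs]
        rw [abs_of_pos hθ.1]
        exact le_trans hθ.2.le (min_le_right _ _)
      have := Complex.norm_exp_sub_one_le hθ1
      have h2 : 2 * ‖(θ:ℂ) * Complex.I‖ < ε := by
        simp only [norm_mul, Complex.norm_I, mul_one, Complex.norm_real, Real.norm_eq_abs]
        rw [abs_of_pos hθ.1]
        have := hθ.2
        have := min_le_left (ε/2) 1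
        linarith
      linarith
  exact ((Set.Ioo_infinite hm0).image hinj).mono himg

lemma ball_infinite11 (w : ℂ) {δ : ℝ} (hδ : 0 < δ) : (Metric.ball w δ).Infinite := by
  have hinj : Set.InjOn (fun t : ℝ => w + (t:ℂ)) (Set.Ioo 0 δ) := by
    intro a ha b hb hab
    simp only [add_right_inj] at hab
    exact_mod_cast hab
  have himg : (fun t : ℝ => w + (t:ℂ)) '' (Set.Ioo 0 δ) ⊆ Metric.ball w δ := by
    rintro _ ⟨t, ht, rfl⟩
    simp only [Metric.mem_ball, dist_eq_norm, add_sub_cancel_left, Complex.norm_real,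
      Real.norm_eq_abs]
    rw [abs_of_pos ht.1]; exact ht.2
  exact ((Set.Ioo_infinite hδ).image hinj).mono himg



/-- A rational function `F = P/Q` (coprime) on `ℂ²`, holomorphic near a point `(w₁, γ)` with
`γ ∈ 𝕋`, which is constant in `z₁` near `w₁` on slices `z₂ = τ` for all `τ ∈ 𝕋` near `γ`,
has `∂F/∂z₁ ≡ 0` on all of its domain `{Q ≠ 0}`. -/
theorem stmt_11 (P Q : MvPolynomial (Fin 2) ℂ) (hco : IsCoprime P Q)
    (F : ℂ → ℂ → ℂ)
    (hF : ∀ z₁ z₂ : ℂ, F z₁ z₂ =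
      MvPolynomial.eval ![z₁, z₂] P / MvPolynomial.eval ![z₁, z₂] Q)
    (w₁ γ : ℂ) (hγ : ‖γ‖ = 1) (hQ : MvPolynomial.eval ![w₁, γ] Q ≠ 0)
    (hconst : ∃ ε > (0:ℝ), ∀ τ : ℂ, ‖τ‖ = 1 → ‖τ - γ‖ < ε →
      ∃ δ > (0:ℝ), ∀ z₁ : ℂ, ‖z₁ - w₁‖ < δ → F z₁ τ = F w₁ τ) :
    ∀ z₁ z₂ : ℂ, MvPolynomial.eval ![z₁, z₂] Q ≠ 0 →
      deriv (fun w => F w z₂) z₁ = 0 := by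
  classical
  set R : MvPolynomial (Fin 2) ℂ :=
    MvPolynomial.pderiv 0 P * Q - P * MvPolynomial.pderiv 0 Q with hR
  have hderiv : ∀ z₁ z₂ : ℂ, MvPolynomial.eval ![z₁, z₂] Q ≠ 0 →
      HasDerivAt (fun w => F w z₂)
        (MvPolynomial.eval ![z₁, z₂] R / (MvPolynomial.eval ![z₁, z₂] Q) ^ 2) z₁ := by
    intro z₁ z₂ hq
    have hq' : (phi11 z₂ Q).eval z₁ ≠ 0 := by rw [eval_phi11]; exact hq
    have h := ((phi11 z₂ P).hasDerivAt z₁).div ((phi11 z₂ Q).hasDerivAt z₁) hq'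
    have hfun : (fun w => F w z₂) = fun w => (phi11 z₂ P).eval w / (phi11 z₂ Q).eval w := by
      funext w; rw [hF, eval_phi11, eval_phi11]
    rw [hfun]
    refine h.congr_deriv ?_
    rw [derivative_phi11, derivative_phi11, eval_phi11, eval_phi11, eval_phi11, eval_phi11, hR]
    rw [map_sub, map_mul, map_mul]
  have hRzero : ∀ z₁ z₂ : ℂ, MvPolynomial.eval ![z₁, z₂] R = 0 := by
    obtain ⟨ε, hε, hc⟩ := hconst
    have hQγ : phi11 γ Q ≠ 0 := fun h => hQ (by rw [← eval_phi11, h, Polynomial.eval_zero])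
    have hΘQ : theta11 Q ≠ 0 := fun h => hQγ (by rw [← map_theta11, h, Polynomial.map_zero])
    have hc0 : (theta11 Q).coeff (theta11 Q).natDegree ≠ 0 := by
      rw [Polynomial.coeff_natDegree]; exact Polynomial.leadingCoeff_ne_zero.mpr hΘQ
    set B : Set ℂ := {τ | phi11 τ Q = 0} with hBdef
    have hBfin : B.Finite := by
      apply (Polynomial.finite_setOf_isRoot hc0).subset
      intro τ hτ
      have h1 : Polynomial.map (Polynomial.evalRingHom τ) (theta11 Q) = 0 := by
        rw [map_theta11]; exact hτ
      have h2 := congrArg (fun p => p.coeff (theta11 Q).natDegree) h1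
      simpa [Polynomial.coeff_map] using h2
    have hSB : ({τ : ℂ | ‖τ‖ = 1 ∧ ‖τ - γ‖ < ε} \ B).Infinite :=
      (arc_infinite11 γ hγ hε).diff hBfin
    have hRτ : ∀ τ ∈ {τ : ℂ | ‖τ‖ = 1 ∧ ‖τ - γ‖ < ε} \ B, phi11 τ R = 0 := by
      rintro τ ⟨⟨hτ1, hτ2⟩, hτB⟩
      obtain ⟨δ, hδ, hce⟩ := hc τ hτ1 hτ2
      apply Polynomial.eq_zero_of_infinite_isRoot
      have hτQ : phi11 τ Q ≠ 0 := hτB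
      have hball : (Metric.ball w₁ δ \ {z | (phi11 τ Q).IsRoot z}).Infinite :=
        (ball_infinite11 w₁ hδ).diff (Polynomial.finite_setOf_isRoot hτQ)
      apply Set.Infinite.mono _ hball
      rintro z₁ ⟨hz1, hz2⟩
      have hq : MvPolynomial.eval ![z₁, τ] Q ≠ 0 := by
        rw [← eval_phi11]; exact hz2
      have hd := (hderiv z₁ τ hq).deriv
      have hloc : deriv (fun w => F w τ) z₁ = 0 := by
        have heq : (fun w => F w τ) =ᶠ[nhds z₁] fun _ => F w₁ τ := by
          filter_upwards [Metric.isOpen_ball.mem_nhds hz1] with w hw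
          exact hce w (by simpa [Metric.mem_ball, dist_eq_norm] using hw)
        rw [heq.deriv_eq]; exact deriv_const _ _
      rw [hd] at hloc
      have : MvPolynomial.eval ![z₁, τ] R = 0 := by
        field_simp at hloc
        simpa using hloc
      simpa [Polynomial.IsRoot, eval_phi11] using this
    have hcoeff : ∀ n : ℕ, (theta11 R).coeff n = 0 := by
      intro n
      apply Polynomial.eq_zero_of_infinite_isRoot
      apply Set.Infinite.mono _ hSB
      intro τ hτ
      have h1 := hRτ τ hτ
      rw [← map_theta11] at h1
      have h2 := congrArg (fun p => p.coeff n) h1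
      simpa [Polynomial.coeff_map, Polynomial.IsRoot] using h2
    have hΘR : theta11 R = 0 := Polynomial.ext fun n => by rw [hcoeff n, Polynomial.coeff_zero]
    intro z₁ z₂
    rw [← eval_phi11, ← map_theta11, hΘR, Polynomial.map_zero, Polynomial.eval_zero]
  intro z₁ z₂ hq
  rw [(hderiv z₁ z₂ hq).deriv, hRzero, zero_div]
end
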